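/- For φ ∈ (0, π/2], let ξ*(φ) = -√2·cos φ + √(2 + 2√2 + cos²φ), let p₂(·; φ) be the quadratic Bézier curve with control points b₀ = (cos φ, -sin φ), b₁ = (ξ*(φ), 0), b₂ = (cos φ, sin φ) (Bernstein basis on [-1,1]), and let E(φ) = max_{t ∈ [-1,1]} | ‖p₂(t; φ)‖² - 1 |. Then E(φ) = ((3 - 2√2)/4) φ⁴ + O(φ⁵) as φ → 0⁺, i.e. the function φ ↦ E(φ) - ((3-2√2)/4) φ⁴ is O(φ⁵) as φ → 0 from the right. -/

import Mathlib

open Real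
set_option maxHeartbeats 1000000

private lemma aux_upper (c s r q t : ℝ) (hs2 : s^2 = 1-c^2) (hu1 : t^2 ≤ 1)
    (hA2 : 0 ≤ ((c + (-r*c+q))/2)^2 - 1) :
    (c*(1+t^2)/2 + (-r*c+q)*(1-t^2)/2)^2 + (s*t)^2 - 1 ≤ ((c + (-r*c+q))/2)^2 - 1 := by
  nlinarith [sq_nonneg t, hA2, hu1, hs2,
    mul_nonneg (sq_nonneg (t*((c - (-r*c+q))/2))) (by linarith : (0:ℝ) ≤ 1 - t^2),
    mul_nonneg (sq_nonneg t) hA2]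

private lemma aux_lower (c s r q t : ℝ)
    (hid : (2*((c + (-r*c+q))/2)*((c - (-r*c+q))/2) + s^2)^2
      = 8*((c - (-r*c+q))/2)^2*(((c + (-r*c+q))/2)^2 - 1))
    (hB2 : 0 < ((c - (-r*c+q))/2)^2) :
    -(((c + (-r*c+q))/2)^2 - 1) ≤ (c*(1+t^2)/2 + (-r*c+q)*(1-t^2)/2)^2 + (s*t)^2 - 1 := by
  nlinarith [hid, hB2,
    sq_nonneg (2*((c - (-r*c+q))/2)^2*t^2 + 2*((c + (-r*c+q))/2)*((c - (-r*c+q))/2) + s^2)]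

private lemma aux_facts (φ c s r q : ℝ)
    (hφ0 : 0 < φ) (hφ2 : φ < 1/2)
    (hcs : s^2 + c^2 = 1) (hc1 : c ≤ 1) (hclb : 1 - φ^2/2 ≤ c)
    (hs0 : 0 < s)
    (hr : r^2 = 2) (hr0 : 0 ≤ r) (hq0 : 0 ≤ q) (hq : q^2 = 2 + 2*r + c^2) :
    1 < r ∧ r < 3/2 ∧ 0 < c ∧ c < 1 ∧ 2 < q ∧ q ≤ 1+r ∧ 1+r - s^2/4 ≤ q ∧
      2 ≤ c + (-r*c+q) := by
  have hr1 : 1 < r := by nlinarith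
  have hr2 : r < 3/2 := by nlinarith
  have hc0 : 0 < c := by nlinarith [mul_pos hφ0 hφ0]
  have hc1' : c < 1 := by nlinarith [mul_pos hs0 hs0]
  have hq2 : 2 < q := by nlinarith [sq_nonneg (q-2), sq_nonneg c]
  have hqub : q ≤ 1 + r := by nlinarith
  have hqlb : 1 + r - s^2/4 ≤ q := by nlinarith [sq_nonneg s]
  have h3 : q^2 = (2 + (r-1)*c)^2 + 2*(r-1)*(1-c)^2 := by
    linear_combination hq - c^2 * hr
  have hq_ge : 2 + (r-1)*c ≤ q := by nlinarith [sq_nonneg (1-c)]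
  exact ⟨hr1, hr2, hc0, hc1', hq2, hqub, hqlb, by linarith⟩

private lemma aux_glb (φ c s r q : ℝ)
    (hφ0 : 0 < φ) (hφ2 : φ < 1/2)
    (hc1 : c ≤ 1) (hclb : 1 - φ^2/2 ≤ c)
    (hs0 : 0 < s) (hsub : s ≤ φ)
    (hr : r^2 = 2) (hr0 : 0 ≤ r) (hr1 : 1 < r)
    (hqlb : 1 + r - s^2/4 ≤ q) :
    1 - φ^2 ≤ (r-1)*(r*c^2 + 1 + c*q)/2 := by
  have hφ4 : (0:ℝ) < φ^4 := pow_pos hφ0 4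
  have hsφ : s^2 ≤ φ^2 := by nlinarith
  have hqlb' : 1 + r - φ^2/4 ≤ q := by linarith
  have hcq : (1 - φ^2/2)*(1 + r - φ^2/4) ≤ c*q := by
    apply mul_le_mul hclb hqlb' (by nlinarith) (by nlinarith [mul_pos hφ0 hφ0])
  have hc2lb : 1 - φ^2 ≤ c^2 := by nlinarith
  have hL : r*(1-φ^2) + 1 + (1-φ^2/2)*(1+r-φ^2/4) ≤ r*c^2 + 1 + c*q := by
    have := mul_le_mul_of_nonneg_left hc2lb hr0
    linarith [hcq]
  have h9 := mul_le_mul_of_nonneg_left hL (by linarith : (0:ℝ) ≤ (r-1)/2)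
  nlinarith [h9, hr, mul_nonneg (by linarith : (0:ℝ) ≤ r-1) (mul_pos hφ0 hφ0).le,
    mul_nonneg (by linarith : (0:ℝ) ≤ r-1) hφ4.le, mul_pos hφ0 hφ0]

private lemma aux_s4 (φ s : ℝ) (hφ0 : 0 < φ) (hφ2 : φ < 1/2)
    (hs0 : 0 < s) (hsub : s ≤ φ) (hslb : φ - φ^3/4 ≤ s) :
    φ^4 - φ^6 ≤ s^4 ∧ s^4 ≤ φ^4 := by
  have hφ4 : (0:ℝ) < φ^4 := pow_pos hφ0 4
  have hφ6 : (0:ℝ) < φ^6 := pow_pos hφ0 6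
  constructor
  · have h8 : 0 ≤ φ - φ^3/4 := by nlinarith [mul_pos hφ0 hφ0]
    have h7 : (φ - φ^3/4)^4 ≤ s^4 := pow_le_pow_left₀ h8 hslb 4
    have hy : φ^2 ≤ 1/4 := by nlinarith
    have h11 : φ^8*φ^2 ≤ φ^8*(1/4) :=
      mul_le_mul_of_nonneg_left hy (pow_nonneg hφ0.le 8)
    nlinarith [h7, h11, pow_nonneg hφ0.le 12, pow_nonneg hφ0.le 8]
  · have hsφ : s^2 ≤ φ^2 := by nlinarith
    calc s^4 = (s^2)^2 := by ring
    _ ≤ (φ^2)^2 := pow_le_pow_left₀ (sq_nonneg s) hsφ 2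
    _ = φ^4 := by ring

private lemma aux_fin (φ M Dh g s r : ℝ)
    (hφ0 : 0 < φ) (hφ2 : φ < 1/2)
    (hr1 : 1 < r) (hr2 : r < 3/2) (hDh1 : 1 ≤ Dh)
    (hMDh : (M - (3-2*r)/4*φ^4) * (2*Dh) = (r-1)*(s^4 - g*φ^4))
    (hg4l : (1-φ^2)*φ^4 ≤ g*φ^4) (hg4u : g*φ^4 ≤ φ^4)
    (hs4l : φ^4 - φ^6 ≤ s^4) (hs4u : s^4 ≤ φ^4) :
    |M - (3-2*r)/4*φ^4| ≤ φ^5 := by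
  have hφ5 : (0:ℝ) < φ^5 := pow_pos hφ0 5
  have hφ6 : (0:ℝ) < φ^6 := pow_pos hφ0 6
  have hp65 : φ^6 ≤ φ^5/2 := by nlinarith [hφ5]
  have hcore1 : s^4 - g*φ^4 ≤ φ^6 := by nlinarith
  have hcore2 : -(φ^6) ≤ s^4 - g*φ^4 := by nlinarith
  have hcore1' : (r-1)*(s^4 - g*φ^4) ≤ φ^6/2 := by
    nlinarith [mul_nonneg (by linarith : (0:ℝ) ≤ r-1)
        (by linarith : (0:ℝ) ≤ φ^6 - (s^4 - g*φ^4)),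
      mul_nonneg (by linarith : (0:ℝ) ≤ 3/2 - r) hφ6.le]
  have hcore2' : -(φ^6/2) ≤ (r-1)*(s^4 - g*φ^4) := by
    nlinarith [mul_nonneg (by linarith : (0:ℝ) ≤ r-1)
        (by linarith : (0:ℝ) ≤ (s^4 - g*φ^4) + φ^6),
      mul_nonneg (by linarith : (0:ℝ) ≤ 3/2 - r) hφ6.le]
  have hDφ : 0 ≤ φ^5*(Dh - 1) := mul_nonneg hφ5.le (by linarith)
  have hprod2 : (M - (3-2*r)/4*φ^4 - φ^5) * (2*Dh) ≤ 0 := by nlinarith [hMDh]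
  have hprod1 : 0 ≤ (M - (3-2*r)/4*φ^4 + φ^5) * (2*Dh) := by nlinarith [hMDh]
  rw [abs_le]
  constructor
  · nlinarith [hprod1, hDh1, hφ5]
  · nlinarith [hprod2, hDh1, hφ5]

private lemma aux_E (φ c s r q : ℝ)
    (hφ0 : 0 < φ) (hφ2 : φ < 1/2)
    (hcs : s^2 + c^2 = 1) (hc1 : c ≤ 1) (hclb : 1 - φ^2/2 ≤ c)
    (hs0 : 0 < s) (hsub : s ≤ φ) (hslb : φ - φ^3/4 ≤ s)
    (hr : r^2 = 2) (hr0 : 0 ≤ r) (hq0 : 0 ≤ q) (hq : q^2 = 2 + 2*r + c^2) :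
    |(((c + (-r*c+q))/2)^2 - 1) - (3-2*r)/4*φ^4| ≤ φ^5 := by
  obtain ⟨hr1, hr2, hc0, hc1', hq2, hqub, hqlb, hcx⟩ :=
    aux_facts φ c s r q hφ0 hφ2 hcs hc1 hclb hs0 hr hr0 hq0 hq
  have hs2 : s^2 = 1 - c^2 := by linarith
  have hφ4 : (0:ℝ) < φ^4 := pow_pos hφ0 4
  have hI2 : ((c + (-r*c+q))^2 - 4)*(r*c^2 + 1 + c*q) = 2*(r-1)*s^4 := by
    linear_combination (1 + c*q + 2*c^2 - c^2*r)*hq + (-c^2 - c^3*q - 2*c^4 + c^4*r)*hr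
      + (2 + 2*s^2 - 2*r - 2*r*s^2 - 2*c^2 + 2*c^2*r)*hs2
  have hDh1 : 1 ≤ r*c^2 + 1 + c*q := by
    nlinarith [mul_nonneg hr0 (sq_nonneg c), mul_nonneg hc0.le hq0]
  have hDh2 : r*c^2 + 1 + c*q ≤ 2 + 2*r := by
    nlinarith [mul_nonneg hr0 (sq_nonneg c), mul_nonneg hc0.le hq0]
  have hMain : ((((c + (-r*c+q))/2)^2 - 1) - (3-2*r)/4*φ^4) * (2*(r*c^2 + 1 + c*q))
      = (r-1)*(s^4 - ((r-1)*(r*c^2 + 1 + c*q)/2)*φ^4) := by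
    linear_combination hI2/2 + (φ^4*(r*c^2 + 1 + c*q)/2)*hr
  have hglb := aux_glb φ c s r q hφ0 hφ2 hc1 hclb hs0 hsub hr hr0 hr1 hqlb
  have hgub : (r-1)*(r*c^2 + 1 + c*q)/2 ≤ 1 := by nlinarith [hDh2]
  obtain ⟨hs4l, hs4u⟩ := aux_s4 φ s hφ0 hφ2 hs0 hsub hslb
  exact aux_fin φ (((c + (-r*c+q))/2)^2 - 1) (r*c^2 + 1 + c*q)
    ((r-1)*(r*c^2 + 1 + c*q)/2) s r hφ0 hφ2 hr1 hr2 hDh1 hMain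
    (mul_le_mul_of_nonneg_right hglb hφ4.le)
    (by nlinarith [mul_le_mul_of_nonneg_right hgub hφ4.le] :
      (r-1)*(r*c^2 + 1 + c*q)/2*φ^4 ≤ φ^4) hs4l hs4u

theorem quadratic_G0_error_asymptotics
    (ξ : ℝ → ℝ)
    (hξ : ∀ φ : ℝ, ξ φ =
      -Real.sqrt 2 * Real.cos φ + Real.sqrt (2 + 2 * Real.sqrt 2 + Real.cos φ ^ 2))
    (p₂ : ℝ → ℝ → EuclideanSpace ℝ (Fin 2))
    (hp₂ : ∀ t φ : ℝ, p₂ t φ =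
      ((1 - t) / 2) ^ 2 • (WithLp.toLp 2 ![Real.cos φ, -Real.sin φ] : EuclideanSpace ℝ (Fin 2)) +
      (2 * ((1 + t) / 2) * ((1 - t) / 2)) • (WithLp.toLp 2 ![ξ φ, 0] : EuclideanSpace ℝ (Fin 2)) +
      ((1 + t) / 2) ^ 2 • (WithLp.toLp 2 ![Real.cos φ, Real.sin φ] : EuclideanSpace ℝ (Fin 2)))
    (E : ℝ → ℝ)
    (hE : ∀ φ : ℝ, IsGreatest ((fun t => |‖p₂ t φ‖ ^ 2 - 1|) '' Set.Icc (-1:ℝ) 1) (E φ)) :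
    (fun φ : ℝ => E φ - ((3 - 2 * Real.sqrt 2) / 4) * φ ^ 4)
      =O[nhdsWithin 0 (Set.Ioi 0)] (fun φ : ℝ => φ ^ 5) := by
  rw [Asymptotics.isBigO_iff]
  refine ⟨1, ?_⟩
  filter_upwards [Ioo_mem_nhdsGT (by norm_num : (0:ℝ) < 1/2)] with φ hφ
  obtain ⟨hφ0, hφ2⟩ := hφ
  have hnorm : ∀ t : ℝ, ‖p₂ t φ‖ ^ 2 =
      (Real.cos φ * (1 + t^2) / 2 + ξ φ * (1 - t^2) / 2) ^ 2 + (Real.sin φ * t) ^ 2 := by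
    intro t
    rw [hp₂ t φ, EuclideanSpace.norm_eq, Real.sq_sqrt (by positivity)]
    simp only [Fin.sum_univ_two,
      show ∀ (u v : EuclideanSpace ℝ (Fin 2)) (i : Fin 2), (u + v) i = u i + v i from
        fun _ _ _ => rfl,
      show ∀ (a : ℝ) (u : EuclideanSpace ℝ (Fin 2)) (i : Fin 2), (a • u) i = a * u i from
        fun _ _ _ => rfl,
      Matrix.cons_val_zero, Matrix.cons_val_one, Matrix.head_cons, Real.norm_eq_abs, sq_abs]
    ring
  have hxi0 := hξ φ
  have hcs : Real.sin φ ^ 2 + Real.cos φ ^ 2 = 1 := Real.sin_sq_add_cos_sq φ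
  have hc1 : Real.cos φ ≤ 1 := Real.cos_le_one φ
  have hclb : 1 - φ^2/2 ≤ Real.cos φ := Real.one_sub_sq_div_two_le_cos
  have hs0 : 0 < Real.sin φ :=
    Real.sin_pos_of_pos_of_lt_pi hφ0 (by nlinarith [Real.pi_gt_three])
  have hsub : Real.sin φ ≤ φ := le_of_lt (Real.sin_lt hφ0)
  have hslb : φ - φ^3/4 ≤ Real.sin φ :=
    by have := Real.sin_gt_sub_cube hφ0; nlinarith [pow_pos hφ0 3]
  obtain ⟨c, hcdef⟩ : ∃ c, Real.cos φ = c := ⟨_, rfl⟩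
  obtain ⟨s, hsdef⟩ : ∃ s, Real.sin φ = s := ⟨_, rfl⟩
  rw [hcdef] at hcs hc1 hclb hnorm hxi0
  rw [hsdef] at hcs hs0 hsub hslb hnorm
  obtain ⟨r, hrdef⟩ : ∃ r, Real.sqrt 2 = r := ⟨_, rfl⟩
  have hr : r ^ 2 = 2 := by rw [← hrdef]; exact Real.sq_sqrt (by norm_num)
  have hr0 : (0:ℝ) ≤ r := hrdef ▸ Real.sqrt_nonneg 2
  rw [hrdef] at hxi0 ⊢
  obtain ⟨q, hqdef⟩ : ∃ q, Real.sqrt (2 + 2*r + c^2) = q := ⟨_, rfl⟩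
  rw [hqdef] at hxi0
  have hq0 : (0:ℝ) ≤ q := hqdef ▸ Real.sqrt_nonneg _
  have hq : q ^ 2 = 2 + 2*r + c^2 := by
    rw [← hqdef]; exact Real.sq_sqrt (by nlinarith [sq_nonneg c])
  rw [hxi0] at hnorm
  obtain ⟨hr1, hr2, hc0, hc1', hq2, hqub, hqlb, hcx⟩ :=
    aux_facts φ c s r q hφ0 hφ2 hcs hc1 hclb hs0 hr hr0 hq0 hq
  have hs2 : s^2 = 1 - c^2 := by linarith
  have hA2 : 0 ≤ ((c + (-r*c+q))/2)^2 - 1 := by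
    nlinarith [hcx, sq_nonneg (c + (-r*c+q) - 2)]
  have hBneg : (c - (-r*c+q))/2 < 0 := by linarith
  have hB2 : 0 < ((c - (-r*c+q))/2)^2 := by
    nlinarith [mul_pos_of_neg_of_neg hBneg hBneg]
  have hid : (2*((c + (-r*c+q))/2)*((c - (-r*c+q))/2) + s^2)^2
      = 8*((c - (-r*c+q))/2)^2*(((c + (-r*c+q))/2)^2 - 1) := by
    linear_combination (1 + s^2 - q^2 + 2*c*r*q - c^2*r^2) * hs2
      + (1/2 - q^2/4 - r/2 + c*r*q + 5*c^2/4 - 3*c^2*r^2/2) * hq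
      + (-1 + 2*c*q - 2*c^2 - 3*c^2*r + c^3*r*q - c^4/2 - c^4*r^2/4) * hr
  have key : E φ = ((c + (-r*c+q))/2)^2 - 1 := by
    refine (hE φ).unique ⟨⟨0, by norm_num, ?_⟩, ?_⟩
    · show |‖p₂ 0 φ‖ ^ 2 - 1| = _
      rw [hnorm 0, abs_of_nonneg (by nlinarith [hA2])]
      ring
    · rintro y ⟨t, ht, rfl⟩
      show |‖p₂ t φ‖ ^ 2 - 1| ≤ _
      rw [hnorm t, abs_le]
      have hu1 : t^2 ≤ 1 := by
        nlinarith [mul_nonneg (sub_nonneg.2 ht.2) (by linarith [ht.1] : (0:ℝ) ≤ t + 1)]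
      exact ⟨aux_lower c s r q t hid hB2, aux_upper c s r q t hs2 hu1 hA2⟩
  rw [key, Real.norm_eq_abs, Real.norm_eq_abs, abs_of_pos (pow_pos hφ0 5), one_mul]
  exact aux_E φ c s r q hφ0 hφ2 hcs hc1 hclb hs0 hsub hslb hr hr0 hq0 hq
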